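/- For the operator D_{q^{-1}} acting on the variable a, and any nonnegative integer n, D_{q^{-1}}^n { (as;q)_∞ / (aω;q)_∞ } = (−q/((1−q)a))^n · ((s/ω;q)_n / (q/(aω);q)_n) · (as;q)_∞/(aω;q)_∞, valid where all products converge and denominators are nonzero. -/

import Mathlib

noncomputable def qPoch (x q : ℂ) (n : ℕ) : ℂ := ∏ j ∈ Finset.range n, (1 - x * q ^ j)

noncomputable def qPochInf (x q : ℂ) : ℂ := ∏' j : ℕ, (1 - x * q ^ j)

noncomputable def qBinom (q : ℂ) (n k : ℕ) : ℂ := qPoch q q n / (qPoch q q k * qPoch q q (n - k))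

noncomputable def Dq (q : ℂ) (f : ℂ → ℂ) : ℂ → ℂ := fun a => (f a - f (q * a)) / ((1 - q) * a)

noncomputable def Dqinv (q : ℂ) (f : ℂ → ℂ) : ℂ → ℂ := fun a => (f (q⁻¹ * a) - f a) / ((q⁻¹ - 1) * a)

noncomputable def mPoch {m : ℕ} (a : Fin m → ℂ) (q : ℂ) (k : ℕ) : ℂ := ∏ i, qPoch (a i) q k

noncomputable def phi {r : ℕ} (a : Fin (r + 1) → ℂ) (b : Fin r → ℂ) (q x y : ℂ) (n : ℕ) : ℂ :=
  ∑ k ∈ Finset.range (n + 1), qBinom q n k * (mPoch a q k / mPoch b q k) * x ^ k * y ^ (n - k)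

noncomputable def psi {r : ℕ} (a : Fin (r + 1) → ℂ) (b : Fin r → ℂ) (q x y : ℂ) (n : ℕ) : ℂ :=
  ∑ k ∈ Finset.range (n + 1), qBinom q n k * (mPoch a q k / mPoch b q k) *
    q ^ ((((k + 1).choose 2 : ℕ) : ℤ) - (n : ℤ) * (k : ℤ)) * x ^ k * y ^ (n - k)


open Complex Filter

lemma hasProd_zero_of_eq_zero {f : ℕ → ℂ} (N : ℕ) (h : f N = 0) : HasProd f 0 := by
  have : ∀ᶠ s in (atTop : Filter (Finset ℕ)), ∏ i ∈ s, f i = 0 := by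
    filter_upwards [Filter.eventually_ge_atTop ({N} : Finset ℕ)] with s hs
    exact Finset.prod_eq_zero (hs (Finset.mem_singleton_self N)) h
  exact Tendsto.congr' (this.mono fun s hs => hs.symm) tendsto_const_nhds

lemma log_summable (x q : ℂ) (hq : ‖q‖ < 1) :
    Summable (fun j : ℕ => Complex.log (1 - x * q ^ j)) := by
  have h0 : Tendsto (fun j : ℕ => x * q ^ j) atTop (nhds 0) := by
    simpa using (tendsto_pow_atTop_nhds_zero_of_norm_lt_one (by simpa using hq)).const_mul x
  have h1 : ∀ᶠ j in atTop, ‖x * q ^ j‖ ≤ 1/2 := by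
    have := h0.norm
    simp only [norm_zero] at this
    exact this.eventually_le_const (by norm_num)
  obtain ⟨N, hN⟩ := h1.exists_forall_of_atTop
  rw [← summable_nat_add_iff N]
  apply Summable.of_norm
  have hsum : Summable (fun j : ℕ => (3/2 : ℝ) * (‖x‖ * ‖q‖ ^ (j + N))) := by
    apply Summable.mul_left
    apply Summable.mul_left
    rw [summable_nat_add_iff N]
    exact summable_geometric_of_lt_one (norm_nonneg q) (by simpa using hq)
  refine Summable.of_nonneg_of_le (fun j => norm_nonneg _) (fun j => ?_) hsum
  have h2 : ‖-(x * q ^ (j + N))‖ ≤ 1/2 := by simpa using hN (j + N) le_add_self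
  have h3 := Complex.norm_log_one_add_half_le_self h2
  rw [← sub_eq_add_neg] at h3
  refine h3.trans ?_
  rw [norm_neg, norm_mul, norm_pow]


lemma qPochInf_multipliable (x q : ℂ) (hq : ‖q‖ < 1) :
    Multipliable (fun j : ℕ => 1 - x * q ^ j) := by
  by_cases h : ∀ j : ℕ, (1 : ℂ) - x * q ^ j ≠ 0
  · exact Complex.multipliable_of_summable_log (log_summable x q hq)
  · push_neg at h
    obtain ⟨N, hN⟩ := h
    exact ⟨0, hasProd_zero_of_eq_zero N hN⟩

lemma qPochInf_ne_zero (x q : ℂ) (hq : ‖q‖ < 1)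
    (h : ∀ j : ℕ, (1 : ℂ) - x * q ^ j ≠ 0) : qPochInf x q ≠ 0 := by
  have h2 : cexp (∑' j : ℕ, Complex.log (1 - x * q ^ j)) = ∏' j : ℕ, (1 - x * q ^ j) :=
    Complex.cexp_tsum_eq_tprod (fun j => h j) (log_summable x q hq)
  rw [qPochInf, ← h2]
  exact Complex.exp_ne_zero _


lemma qPochInf_shift (x q : ℂ) (hq : ‖q‖ < 1) :
    qPochInf x q = (1 - x) * qPochInf (x * q) q := by
  have hm : Multipliable (fun n : ℕ => (1 : ℂ) - x * q ^ (n + 1)) := by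
    apply (qPochInf_multipliable (x * q) q hq).congr
    intro b
    ring
  rw [qPochInf, tprod_eq_zero_mul' (f := fun j : ℕ => (1:ℂ) - x * q ^ j) hm]
  simp only [pow_zero, mul_one, qPochInf]
  congr 1
  apply tprod_congr
  intro j
  ring_nf

-- 1 - z ≠ 0 when |z| < 1
lemma one_sub_ne_zero_of_abs_lt {z : ℂ} (h : ‖z‖ < 1) : (1 : ℂ) - z ≠ 0 := by
  intro hz
  rw [sub_eq_zero] at hz
  rw [← hz] at h
  simp at h


lemma stepA (q s ω b : ℂ) (hq0 : q ≠ 0) (hq1 : ‖q‖ < 1) (hb : b ≠ 0)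
    (hfac : ∀ j : ℕ, (1:ℂ) - (b * ω / q) * q ^ j ≠ 0) :
    Dqinv q (fun c => qPochInf (c * s) q / qPochInf (c * ω) q) b
      = ((ω - s) / (1 - q)) * (qPochInf (b * s) q / qPochInf (b * (ω / q)) q) := by
  have h1q : (1:ℂ) - q ≠ 0 := one_sub_ne_zero_of_abs_lt hq1
  have e1 : qPochInf (q⁻¹ * b * s) q = (1 - b * s / q) * qPochInf (b * s) q := by
    have h := qPochInf_shift (b * s / q) q hq1
    rw [div_mul_cancel₀ _ hq0] at h
    rw [show q⁻¹ * b * s = b * s / q by field_simp]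
    exact h
  have e2 : qPochInf (q⁻¹ * b * ω) q = (1 - b * ω / q) * qPochInf (b * ω) q := by
    have h := qPochInf_shift (b * ω / q) q hq1
    rw [div_mul_cancel₀ _ hq0] at h
    rw [show q⁻¹ * b * ω = b * ω / q by field_simp]
    exact h
  have e3 : qPochInf (b * (ω / q)) q = (1 - b * ω / q) * qPochInf (b * ω) q := by
    have h := qPochInf_shift (b * ω / q) q hq1
    rw [div_mul_cancel₀ _ hq0] at h
    rw [show b * (ω / q) = b * ω / q by ring]
    exact h
  have hD : qPochInf (b * ω) q ≠ 0 := by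
    apply qPochInf_ne_zero _ _ hq1
    intro j
    have h := hfac (j + 1)
    rw [show (b * ω / q) * q ^ (j + 1) = b * ω * q ^ j by
      field_simp; ring] at h
    exact h
  have hv : (1:ℂ) - b * ω / q ≠ 0 := by simpa using hfac 0
  have hqi : q⁻¹ - 1 ≠ 0 := by
    rw [sub_ne_zero]
    intro h
    rw [inv_eq_one] at h
    rw [h] at hq1
    simp at hq1
  have hv' : q - b * ω ≠ 0 := by
    intro h
    apply hv
    rw [sub_eq_zero] at h
    rw [← h, div_self hq0]
    ring
  simp only [Dqinv]
  rw [e1, e2, e3]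
  field_simp
  ring

lemma iter_congr (q : ℂ) (f g : ℂ → ℂ) :
    ∀ (n : ℕ) (a : ℂ), (∀ j ≤ n, f (q⁻¹ ^ j * a) = g (q⁻¹ ^ j * a)) →
      (Dqinv q)^[n] f a = (Dqinv q)^[n] g a := by
  intro n
  induction n with
  | zero => intro a h; simpa using h 0 le_rfl
  | succ n IH =>
    intro a h
    rw [Function.iterate_succ_apply', Function.iterate_succ_apply']
    simp only [Dqinv]
    rw [IH a (fun j hj => h j (hj.trans (Nat.le_succ n)))]
    rw [IH (q⁻¹ * a) (fun j hj => ?_)]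
    have h2 := h (j + 1) (Nat.succ_le_succ hj)
    rw [pow_succ] at h2
    rw [show q⁻¹ ^ j * (q⁻¹ * a) = q⁻¹ ^ j * q⁻¹ * a by ring]
    exact h2

lemma iter_const_mul (q c : ℂ) (f : ℂ → ℂ) :
    ∀ (n : ℕ) (a : ℂ), (Dqinv q)^[n] (fun b => c * f b) a = c * (Dqinv q)^[n] f a := by
  intro n
  induction n with
  | zero => intro a; rfl
  | succ n IH =>
    intro a
    rw [Function.iterate_succ_apply', Function.iterate_succ_apply']
    simp only [Dqinv]
    rw [IH, IH]
    ring

lemma keyB (q s : ℂ) (hq0 : q ≠ 0) (hq1 : ‖q‖ < 1) :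
    ∀ (n : ℕ) (ω a : ℂ), a ≠ 0 →
      (∀ k, 1 ≤ k → k ≤ n → ∀ j : ℕ, (1:ℂ) - (a * ω / q ^ k) * q ^ j ≠ 0) →
      (Dqinv q)^[n] (fun b => qPochInf (b * s) q / qPochInf (b * ω) q) a
        = (∏ k ∈ Finset.range n, ((ω / q ^ k - s) / (1 - q))) *
            (qPochInf (a * s) q / qPochInf (a * (ω / q ^ n)) q) := by
  intro n
  induction n with
  | zero => intro ω a ha hfac; simp
  | succ n IH =>
    intro ω a ha hfac
    rw [Function.iterate_succ_apply]
    rw [iter_congr q _ (fun b => ((ω - s) / (1 - q)) *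
        (qPochInf (b * s) q / qPochInf (b * (ω / q)) q)) n a (fun j hj => ?_)]
    · rw [iter_const_mul]
      rw [IH (ω / q) a ha (fun k hk1 hkn i => ?_)]
      · rw [show a * (ω / q / q ^ n) = a * (ω / q ^ (n + 1)) by
          rw [div_div, ← pow_succ']]
        rw [Finset.prod_range_succ']
        have hprod : (∏ k ∈ Finset.range n, ((ω / q / q ^ k - s) / (1 - q)))
            = ∏ k ∈ Finset.range n, ((ω / q ^ (k + 1) - s) / (1 - q)) := by
          apply Finset.prod_congr rfl
          intro k _
          rw [div_div, ← pow_succ']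
        rw [hprod]
        simp only [pow_zero, div_one]
        ring
      · have h := hfac (k + 1) (Nat.le_add_left 1 k) (Nat.succ_le_succ hkn) i
        rw [show a * (ω / q) / q ^ k = a * ω / q ^ (k + 1) by
          rw [pow_succ']; field_simp]
        exact h
    · have hb : q⁻¹ ^ j * a ≠ 0 := mul_ne_zero (pow_ne_zero j (inv_ne_zero hq0)) ha
      apply stepA q s ω _ hq0 hq1 hb
      intro i
      have h := hfac (j + 1) (Nat.le_add_left 1 j) (Nat.succ_le_succ hj) i
      rw [show q⁻¹ ^ j * a * ω / q = a * ω / q ^ (j + 1) by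
        rw [pow_succ, inv_pow]; field_simp] at *
      exact h

lemma qPochInf_div_pow (x q : ℂ) (hq0 : q ≠ 0) (hq1 : ‖q‖ < 1) :
    ∀ n : ℕ, qPochInf (x / q ^ n) q
      = (∏ k ∈ Finset.range n, (1 - x / q ^ (k + 1))) * qPochInf x q := by
  intro n
  induction n with
  | zero => simp
  | succ n IH =>
    have h := qPochInf_shift (x / q ^ (n + 1)) q hq1
    rw [show x / q ^ (n + 1) * q = x / q ^ n by rw [pow_succ]; field_simp] at h
    rw [h, IH, Finset.prod_range_succ]
    ring



/-- `D_{q^{-1}}^n {(as;q)_∞/(aω;q)_∞}`. -/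
theorem stmt7 (q a s ω : ℂ) (hq0 : q ≠ 0) (hq1 : ‖q‖ < 1) (ha : a ≠ 0)
    (hω : ω ≠ 0) (haω : ‖a * ω‖ < 1) (n : ℕ)
    (hden : qPoch (q / (a * ω)) q n ≠ 0) :
    (Dqinv q)^[n] (fun a => qPochInf (a * s) q / qPochInf (a * ω) q) a
      = (-(q / ((1 - q) * a))) ^ n
          * (qPoch (s / ω) q n / qPoch (q / (a * ω)) q n)
          * (qPochInf (a * s) q / qPochInf (a * ω) q) := by
  have haω0 : a * ω ≠ 0 := mul_ne_zero ha hω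
  have h1q : (1:ℂ) - q ≠ 0 := one_sub_ne_zero_of_abs_lt hq1
  have hdenf : ∀ k ∈ Finset.range n, (1:ℂ) - q / (a * ω) * q ^ k ≠ 0 :=
    fun k hk => Finset.prod_ne_zero_iff.mp hden k hk
  have hbig : ∀ k, 1 ≤ k → k ≤ n → ∀ j : ℕ, (1:ℂ) - (a * ω / q ^ k) * q ^ j ≠ 0 := by
    intro k hk1 hkn j
    rcases le_or_gt k j with hkj | hjk
    · rw [show a * ω / q ^ k * q ^ j = a * ω * q ^ (j - k) by
        rw [show q ^ j = q ^ k * q ^ (j - k) by rw [← pow_add, Nat.add_sub_cancel' hkj]]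
        field_simp]
      apply one_sub_ne_zero_of_abs_lt
      rw [norm_mul, norm_pow]
      calc ‖a * ω‖ * ‖q‖ ^ (j - k)
          ≤ ‖a * ω‖ * 1 := by
            apply mul_le_mul_of_nonneg_left _ (norm_nonneg _)
            exact pow_le_one₀ (norm_nonneg q) hq1.le
        _ < 1 := by rwa [mul_one]
    · rw [show a * ω / q ^ k * q ^ j = a * ω / q ^ (k - j) by
        rw [show q ^ k = q ^ (k - j) * q ^ j by rw [← pow_add, Nat.sub_add_cancel hjk.le]]
        field_simp]
      intro h
      rw [sub_eq_zero] at h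
      have haq : a * ω = q ^ (k - j) := by
        field_simp at h
        exact h.symm
      apply hdenf (k - j - 1) (Finset.mem_range.mpr (by omega))
      rw [sub_eq_zero, haq]
      rw [show q / q ^ (k - j) * q ^ (k - j - 1) = q ^ (1 + (k - j - 1)) / q ^ (k - j) by
        rw [pow_add, pow_one]; ring]
      rw [show 1 + (k - j - 1) = k - j by omega, div_self (pow_ne_zero _ hq0)]
  have hD : qPochInf (a * ω) q ≠ 0 := by
    apply qPochInf_ne_zero _ _ hq1
    intro j
    apply one_sub_ne_zero_of_abs_lt
    rw [norm_mul, norm_pow]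
    calc ‖a * ω‖ * ‖q‖ ^ j
        ≤ ‖a * ω‖ * 1 := by
          apply mul_le_mul_of_nonneg_left _ (norm_nonneg _)
          exact pow_le_one₀ (norm_nonneg q) hq1.le
      _ < 1 := by rwa [mul_one]
  have hF : ∀ k ∈ Finset.range n, (1:ℂ) - a * ω / q ^ (k + 1) ≠ 0 := by
    intro k hk
    have := hbig (k + 1) (Nat.le_add_left 1 k) (Nat.succ_le_of_lt (Finset.mem_range.mp hk)) 0
    simpa using this
  have hFne : (∏ k ∈ Finset.range n, ((1:ℂ) - a * ω / q ^ (k + 1))) ≠ 0 :=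
    Finset.prod_ne_zero_iff.mpr hF
  rw [keyB q s hq0 hq1 n ω a ha hbig]
  rw [show a * (ω / q ^ n) = (a * ω) / q ^ n by ring]
  rw [qPochInf_div_pow (a * ω) q hq0 hq1 n]
  have key : ∀ k ∈ Finset.range n, ((ω / q ^ k - s) / (1 - q))
      = ((-(q / ((1 - q) * a))) * ((1 - s / ω * q ^ k) / (1 - q / (a * ω) * q ^ k))) *
          (1 - a * ω / q ^ (k + 1)) := by
    intro k hk
    have hk1 := hdenf k hk
    have hrw : (1:ℂ) - a * ω / q ^ (k + 1)
        = -(a * ω / q ^ (k + 1)) * (1 - q / (a * ω) * q ^ k) := by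
      field_simp
      ring
    rw [hrw]
    rw [show (-(q / ((1 - q) * a))) * ((1 - s / ω * q ^ k) / (1 - q / (a * ω) * q ^ k)) *
        (-(a * ω / q ^ (k + 1)) * (1 - q / (a * ω) * q ^ k))
        = (-(q / ((1 - q) * a))) * (1 - s / ω * q ^ k) * (-(a * ω / q ^ (k + 1))) *
          ((1 - q / (a * ω) * q ^ k) / (1 - q / (a * ω) * q ^ k)) by ring]
    rw [div_self hk1, mul_one]
    field_simp
    ring
  rw [Finset.prod_congr rfl key, Finset.prod_mul_distrib, Finset.prod_mul_distrib,
    Finset.prod_const, Finset.card_range, Finset.prod_div_distrib]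
  rw [qPoch, qPoch]
  set P1 := ∏ j ∈ Finset.range n, ((1:ℂ) - s / ω * q ^ j) with hP1
  set P2 := ∏ j ∈ Finset.range n, ((1:ℂ) - q / (a * ω) * q ^ j) with hP2
  set F := ∏ k ∈ Finset.range n, ((1:ℂ) - a * ω / q ^ (k + 1)) with hFdef
  set N := qPochInf (a * s) q with hN
  set D := qPochInf (a * ω) q with hDdef
  have hP2ne : P2 ≠ 0 := hden
  field_simp
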